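/- Let G be a k-uniform hypergraph on n vertices. Then there exists a tight component G* of G such that e_k(𝒢*) ≥ (e_{k-1}(𝒢*)/binom(n,k-1)) · e(G), where 𝒢* is the k-complex generated by the down-closure of G*. -/

import Mathlib

open Finset

variable {V : Type*} [DecidableEq V]

/-- The number of edges of cardinality `i` of a hypergraph. -/
def ecount (G : Finset (Finset V)) (i : ℕ) : ℕ := (G.filter fun e => e.card = i).card

/-- The complex generated by the down-closure of `G`: all subsets of edges of `G`. -/
def downClosure (G : Finset (Finset V)) : Finset (Finset V) := G.biUnion Finset.powerset

/-- `W` is a tight walk in the `k`-graph `G`: every `k` consecutive vertices form an edge. -/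
def IsTightWalk (G : Finset (Finset V)) (k : ℕ) (W : List V) : Prop :=
  k ≤ W.length ∧ ∀ i, i + k ≤ W.length → ((W.drop i).take k).toFinset ∈ G

/-- Edges `e` and `f` of the `k`-graph `G` are tightly connected: there is a tight walk
beginning with the vertices of `e` (in some order) and ending with the vertices of `f`
(in some order). -/
def TightlyConnected (G : Finset (Finset V)) (k : ℕ) (e f : Finset V) : Prop :=
  ∃ W : List V, IsTightWalk G k W ∧ (W.take k).toFinset = e ∧
    (W.reverse.take k).toFinset = f

/-- `C` is a tight component of the `k`-graph `G`: the equivalence class of some edge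
under the tightly-connected relation. -/
def IsTightComponent (G : Finset (Finset V)) (k : ℕ) (C : Finset (Finset V)) : Prop :=
  ∃ e₀ ∈ G, ∀ f, f ∈ C ↔ f ∈ G ∧ TightlyConnected G k e₀ f

theorem isTightWalk_iff_infix {G : Finset (Finset V)} {k : ℕ} {W : List V} :
    IsTightWalk G k W ↔ k ≤ W.length ∧
      ∀ l : List V, l.length = k → l <:+: W → l.toFinset ∈ G := by
  constructor
  · rintro ⟨hlen, h⟩
    refine ⟨hlen, fun l hl ⟨s, t, hst⟩ => ?_⟩
    have hd : W.drop s.length = l ++ t := by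
      rw [← hst, List.append_assoc, List.drop_left]
    have : (W.drop s.length).take k = l := by
      rw [hd, ← hl, List.take_left]
    rw [← this]
    apply h
    have := congrArg List.length hst
    simp at this
    omega
  · rintro ⟨hlen, h⟩
    refine ⟨hlen, fun i hi => ?_⟩
    apply h
    · rw [List.length_take, List.length_drop]; omega
    · exact ((W.drop i).take_prefix k).isInfix.trans (W.drop_suffix i).isInfix

theorem IsTightWalk.reverse {G : Finset (Finset V)} {k : ℕ} {W : List V}
    (h : IsTightWalk G k W) : IsTightWalk G k W.reverse := by
  rw [isTightWalk_iff_infix] at h ⊢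
  refine ⟨by simpa using h.1, fun l hl hinf => ?_⟩
  have : l.reverse <:+: W := by
    rwa [← List.reverse_infix, List.reverse_reverse]
  have := h.2 l.reverse (by simpa using hl) this
  simpa using this

theorem walk_extend {G : Finset (Finset V)} {k : ℕ} {W : List V} {h g : Finset V}
    (hW : IsTightWalk G k W) (hlast : (W.reverse.take k).toFinset = h)
    (hh : h.card = k) (hgG : g ∈ G) (hgc : g.card = k)
    (hadj : k - 1 ≤ (h ∩ g).card) :
    ∃ W', IsTightWalk G k W' ∧ W'.take k = W.take k ∧
      (W'.reverse.take k).toFinset = g := by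
  by_cases hhg : h = g
  · exact ⟨W, hW, rfl, hlast.trans (by rw [hhg])⟩
  obtain ⟨hkW, hWwin⟩ := hW
  set L := W.drop (W.length - k) with hLdef
  have hLlen : L.length = k := by simp [hLdef]; omega
  have hLfin : L.toFinset = h := by
    rw [List.take_reverse, List.toFinset_reverse] at hlast; exact hlast
  have hLnd : L.Nodup := by
    have h1 : L.dedup.length = L.length := by
      rw [← L.card_toFinset, hLfin, hh, hLlen]
    have := L.dedup_sublist.eq_of_length h1
    rw [← this]; exact L.nodup_dedup
  have hhG : h ∈ G := by
    have := hWwin (W.length - k) (by omega)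
    rwa [← hLdef, List.take_of_length_le (by omega), hLfin] at this
  -- intersection has size exactly k - 1, and k ≥ 1
  have hinter : (h ∩ g).card = k - 1 ∧ 1 ≤ k := by
    have hsub : h ∩ g ⊆ h := Finset.inter_subset_left
    have hle : (h ∩ g).card ≤ k := hh ▸ Finset.card_le_card hsub
    have hne : (h ∩ g).card ≠ k := by
      intro hceq
      have : h ∩ g = h := Finset.eq_of_subset_of_card_le hsub (by omega)
      have hsub2 : h ⊆ g := this ▸ Finset.inter_subset_right
      exact hhg (Finset.eq_of_subset_of_card_le hsub2 (by omega))
    constructor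
    · omega
    · by_contra hk0
      have : k = 0 := by omega
      subst this
      apply hhg
      rw [Finset.card_eq_zero] at hh hgc; rw [hh, hgc]
  -- get v ∈ h \ g and x ∈ g \ h
  have hvcard : (h \ g).card = 1 := by
    have := Finset.card_inter_add_card_sdiff h g
    omega
  have hxcard : (g \ h).card = 1 := by
    have := Finset.card_inter_add_card_sdiff g h
    rw [Finset.inter_comm] at this
    omega
  obtain ⟨v, hv⟩ := Finset.card_eq_one.mp hvcard
  obtain ⟨x, hx⟩ := Finset.card_eq_one.mp hxcard
  have hvh : v ∈ h := by
    have : v ∈ h \ g := hv ▸ Finset.mem_singleton_self v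
    exact (Finset.mem_sdiff.mp this).1
  have hvg : v ∉ g := by
    have : v ∈ h \ g := hv ▸ Finset.mem_singleton_self v
    exact (Finset.mem_sdiff.mp this).2
  have hxg : x ∈ g := by
    have : x ∈ g \ h := hx ▸ Finset.mem_singleton_self x
    exact (Finset.mem_sdiff.mp this).1
  have herase : h.erase v = h ∩ g := by
    ext a
    simp only [Finset.mem_erase, Finset.mem_inter]
    constructor
    · rintro ⟨hav, hah⟩
      refine ⟨hah, ?_⟩
      by_contra hag
      have : a ∈ h \ g := Finset.mem_sdiff.mpr ⟨hah, hag⟩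
      rw [hv, Finset.mem_singleton] at this
      exact hav this
    · rintro ⟨hah, hag⟩
      exact ⟨fun hav => hvg (hav ▸ hag), hah⟩
  have hinsert : insert x (h ∩ g) = g := by
    have h1 : g.erase x = h ∩ g := by
      ext a
      simp only [Finset.mem_erase, Finset.mem_inter]
      constructor
      · rintro ⟨hax, hag⟩
        refine ⟨?_, hag⟩
        by_contra hah
        have : a ∈ g \ h := Finset.mem_sdiff.mpr ⟨hag, hah⟩
        rw [hx, Finset.mem_singleton] at this
        exact hax this
      · rintro ⟨hah, hag⟩
        have hxh : x ∉ h := by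
          have : x ∈ g \ h := hx ▸ Finset.mem_singleton_self x
          exact (Finset.mem_sdiff.mp this).2
        exact ⟨fun hax => hxh (hax ▸ hah), hag⟩
    rw [← h1, Finset.insert_erase hxg]
  -- locate v in L
  have hvL : v ∈ L := by rw [← List.mem_toFinset, hLfin]; exact hvh
  obtain ⟨⟨j, hjL⟩, hvget⟩ := List.mem_iff_get.mp hvL
  have hjk : j < k := hLlen ▸ hjL
  have hvj : L[j]'hjL = v := hvget
  -- the appended list
  set M : List V := L.take j ++ [x] with hMdef
  have hMlen : M.length = j + 1 := by
    simp [hMdef, List.length_take]; omega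
  set W' : List V := W ++ M with hW'def
  have hW'len : W'.length = W.length + j + 1 := by
    simp [hW'def, hMlen]; omega
  -- computation of drops past the junction
  have factD : ∀ i, W.length - k ≤ i → i ≤ W.length →
      W'.drop i = L.drop (i - (W.length - k)) ++ M := by
    intro i h1 h2
    rw [hW'def, List.drop_append_of_le_length h2, hLdef, List.drop_drop]
    congr 2
    omega
  -- rotation windows stay equal to h
  have fact1 : ∀ j', j' ≤ j → (L.drop j' ++ M.take j').toFinset = L.toFinset := by
    intro j' hj'
    have : M.take j' = L.take j' := by
      rw [hMdef, List.take_append_of_le_length (by rw [List.length_take]; omega),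
        List.take_take]
      congr 1; omega
    rw [this, List.toFinset_append, Finset.union_comm, ← List.toFinset_append,
      List.take_append_drop]
  -- the final window is g
  have hsplit : L = L.take j ++ v :: L.drop (j + 1) := by
    conv_lhs => rw [← List.take_append_drop j L]
    rw [List.drop_eq_getElem_cons hjL, hvj]
  have hvtake : v ∉ L.take j ∧ v ∉ L.drop (j + 1) := by
    have := hLnd
    rw [hsplit, List.nodup_append] at this
    obtain ⟨-, hnd2, hdisj⟩ := this
    rw [List.nodup_cons] at hnd2
    exact ⟨fun hm => hdisj v hm v List.mem_cons_self rfl, hnd2.1⟩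
  have hX : (L.drop (j + 1)).toFinset ∪ (L.take j).toFinset = h.erase v := by
    set X := (L.drop (j + 1)).toFinset ∪ (L.take j).toFinset with hXdef
    have h1 : h = insert v X := by
      rw [← hLfin]
      conv_lhs => rw [hsplit]
      simp only [List.toFinset_append, List.toFinset_cons, hXdef]
      rw [Finset.union_insert, Finset.union_comm]
    have h2 : v ∉ X := by
      simp only [hXdef, Finset.mem_union, List.mem_toFinset]
      push_neg
      exact ⟨hvtake.2, hvtake.1⟩
    rw [h1, Finset.erase_insert h2]
  have fact2 : (L.drop (j + 1) ++ M).toFinset = g := by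
    rw [hMdef, ← List.append_assoc, List.toFinset_append, List.toFinset_append]
    show (L.drop (j+1)).toFinset ∪ (L.take j).toFinset ∪ [x].toFinset = g
    rw [hX, List.toFinset_cons, List.toFinset_nil, insert_empty_eq]
    rw [Finset.union_comm, ← Finset.insert_eq, herase, hinsert]
  refine ⟨W', ⟨by omega, ?_⟩, ?_, ?_⟩
  · -- tight walk
    intro i hi
    rw [hW'len] at hi
    by_cases hcase : i + k ≤ W.length
    · rw [hW'def, List.drop_append_of_le_length (by omega),
        List.take_append_of_le_length (by rw [List.length_drop]; omega)]
      exact hWwin i hcase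
    · have h1 : W.length - k ≤ i := by omega
      have h2 : i ≤ W.length := by omega
      set j' := i - (W.length - k) with hj'def
      have hj'1 : 1 ≤ j' := by omega
      have hj'2 : j' ≤ j + 1 := by omega
      rw [factD i h1 h2]
      have hkj' : k - (k - j') = j' := by omega
      rw [List.take_append,
        List.take_of_length_le (by rw [List.length_drop, hLlen]; omega),
        List.length_drop, hLlen, hkj']
      by_cases hcase2 : j' ≤ j
      · rw [fact1 j' hcase2, hLfin]; exact hhG
      · have heq : i - (W.length - k) = j + 1 := by omega
        have heq2 : j' = j + 1 := by omega
        rw [heq, heq2, List.take_of_length_le (le_of_eq hMlen), fact2]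
        exact hgG
  · -- same start
    rw [hW'def, List.take_append_of_le_length hkW]
  · -- ends at g
    rw [List.take_reverse, List.toFinset_reverse, hW'len]
    have h1 : W.length - k ≤ W.length + j + 1 - k := by omega
    have h2 : W.length + j + 1 - k ≤ W.length := by omega
    rw [factD _ h1 h2]
    have : W.length + j + 1 - k - (W.length - k) = j + 1 := by omega
    rw [this, fact2]

theorem tc_refl {G : Finset (Finset V)} {k : ℕ} {e : Finset V} (he : e ∈ G)
    (hec : e.card = k) : TightlyConnected G k e e := by
  refine ⟨e.toList, ⟨by rw [Finset.length_toList, hec], fun i hi => ?_⟩, ?_, ?_⟩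
  · rw [Finset.length_toList, hec] at hi
    have hi0 : i = 0 := by omega
    subst hi0
    rw [List.drop_zero, ← hec, ← Finset.length_toList, List.take_length,
      Finset.toList_toFinset]
    exact he
  · rw [← hec, ← Finset.length_toList, List.take_length, Finset.toList_toFinset]
  · rw [← hec, ← Finset.length_toList, ← List.length_reverse, List.take_length,
      List.toFinset_reverse, Finset.toList_toFinset]

theorem tc_symm {G : Finset (Finset V)} {k : ℕ} {e f : Finset V}
    (h : TightlyConnected G k e f) : TightlyConnected G k f e := by
  obtain ⟨W, hW, h1, h2⟩ := h
  exact ⟨W.reverse, hW.reverse, h2, by rwa [List.reverse_reverse]⟩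

/-- The adjacency relation: two edges of `G` sharing at least `k-1` vertices. -/
def Adj (G : Finset (Finset V)) (k : ℕ) (e f : Finset V) : Prop :=
  e ∈ G ∧ f ∈ G ∧ k - 1 ≤ (e ∩ f).card

theorem walk_to_chain {G : Finset (Finset V)} {k : ℕ} (hG : ∀ e ∈ G, e.card = k) :
    ∀ W : List V, IsTightWalk G k W →
      Relation.ReflTransGen (Adj G k) (W.take k).toFinset (W.reverse.take k).toFinset := by
  intro W
  induction W with
  | nil =>
    intro hW
    have hk : k = 0 := by have := hW.1; simpa using this
    subst hk
    simp
    exact Relation.ReflTransGen.refl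
  | cons y T ih =>
    intro hW
    have hlen : k ≤ T.length + 1 := by have := hW.1; simpa using this
    by_cases hcase : T.length + 1 = k
    · have h1 : (y :: T).take k = y :: T := List.take_of_length_le (by simp; omega)
      have h2 : (y :: T).reverse.take k = (y :: T).reverse :=
        List.take_of_length_le (by simp; omega)
      rw [h1, h2, List.toFinset_reverse]
    · have hkT : k ≤ T.length := by omega
      have hTwalk : IsTightWalk G k T := by
        rw [isTightWalk_iff_infix] at hW ⊢
        exact ⟨hkT, fun l hl hinf => hW.2 l hl (hinf.trans (T.suffix_cons y).isInfix)⟩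
      have hih := ih hTwalk
      have hrev : (y :: T).reverse.take k = T.reverse.take k := by
        rw [List.reverse_cons, List.take_append_of_le_length (by simpa using hkT)]
      rw [hrev]
      have hw0 : ((y :: T).take k).toFinset ∈ G := by
        have := hW.2 0 (by simp; omega)
        simpa using this
      have hw1 : (T.take k).toFinset ∈ G := hTwalk.2 0 (by simpa using hkT)
      refine Relation.ReflTransGen.head ⟨hw0, hw1, ?_⟩ hih
      rcases Nat.eq_zero_or_pos k with hk0 | hkpos
      · simp [hk0]
      · have hnd : ((y :: T).take k).Nodup := by
          have hcard := hG _ hw0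
          have hlen2 : ((y :: T).take k).length = k := by simp; omega
          have hdd : ((y :: T).take k).dedup.length = ((y :: T).take k).length := by
            rw [← List.card_toFinset, hcard, hlen2]
          rw [← ((y :: T).take k).dedup_sublist.eq_of_length hdd]
          exact List.nodup_dedup _
        have htake : (y :: T).take k = y :: T.take (k - 1) := by
          obtain ⟨k', rfl⟩ : ∃ k', k = k' + 1 := ⟨k - 1, by omega⟩
          simp [List.take_cons]
        have hDnd : (T.take (k - 1)).Nodup := by
          rw [htake, List.nodup_cons] at hnd
          exact hnd.2
        have hDcard : (T.take (k - 1)).toFinset.card = k - 1 := by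
          rw [List.toFinset_card_of_nodup hDnd, List.length_take]
          omega
        have hsub1 : (T.take (k - 1)).toFinset ⊆ ((y :: T).take k).toFinset := by
          rw [htake, List.toFinset_cons]
          exact Finset.subset_insert _ _
        have hsub2 : (T.take (k - 1)).toFinset ⊆ (T.take k).toFinset := by
          intro a ha
          rw [List.mem_toFinset] at ha ⊢
          have heq : T.take (k - 1) = (T.take k).take (k - 1) := by
            rw [List.take_take, min_eq_left (by omega)]
          exact List.take_subset _ _ (heq ▸ ha)
        calc k - 1 = (T.take (k - 1)).toFinset.card := hDcard.symm
          _ ≤ _ := Finset.card_le_card (Finset.subset_inter hsub1 hsub2)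

theorem chain_to_tc {G : Finset (Finset V)} {k : ℕ} (hG : ∀ e ∈ G, e.card = k)
    {e f : Finset V} (he : e ∈ G) (h : Relation.ReflTransGen (Adj G k) e f) :
    TightlyConnected G k e f := by
  induction h with
  | refl => exact tc_refl he (hG e he)
  | tail hab hbc ih =>
    obtain ⟨W, hW, h1, h2⟩ := ih
    obtain ⟨hbG, hcG, hbc'⟩ := hbc
    obtain ⟨W', hW', h1', h2'⟩ :=
      walk_extend hW h2 (hG _ hbG) hcG (hG _ hcG) hbc'
    exact ⟨W', hW', h1' ▸ h1, h2'⟩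

theorem tc_to_chain {G : Finset (Finset V)} {k : ℕ} (hG : ∀ e ∈ G, e.card = k)
    {e f : Finset V} (h : TightlyConnected G k e f) :
    Relation.ReflTransGen (Adj G k) e f := by
  obtain ⟨W, hW, h1, h2⟩ := h
  have := walk_to_chain hG W hW
  rwa [h1, h2] at this

theorem exists_dense_tight_component [Fintype V] (k n : ℕ) (hn : Fintype.card V = n)
    (G : Finset (Finset V)) (hG : ∀ e ∈ G, e.card = k) (hne : G.Nonempty) :
    ∃ C : Finset (Finset V), IsTightComponent G k C ∧
      ecount (downClosure C) (k - 1) * G.card ≤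
        ecount (downClosure C) k * Nat.choose n (k - 1) := by
  classical
  obtain ⟨e₀, he₀⟩ := hne
  set comp : Finset V → Finset (Finset V) :=
    fun e => G.filter (fun f => TightlyConnected G k e f) with hcomp
  set F : Finset (Finset (Finset V)) := G.image comp with hF
  have hmemcomp : ∀ e ∈ G, e ∈ comp e :=
    fun e he => Finset.mem_filter.mpr ⟨he, tc_refl he (hG e he)⟩
  have hcompsub : ∀ e, comp e ⊆ G := fun e => Finset.filter_subset _ _
  have hcompeq : ∀ e ∈ G, ∀ e' ∈ G, TightlyConnected G k e e' → comp e = comp e' := by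
    intro e he e' he' htc
    ext g
    simp only [hcomp, Finset.mem_filter, and_congr_right_iff]
    intro hg
    constructor
    · intro h1
      exact chain_to_tc hG he' ((tc_to_chain hG (tc_symm htc)).trans (tc_to_chain hG h1))
    · intro h1
      exact chain_to_tc hG he ((tc_to_chain hG htc).trans (tc_to_chain hG h1))
  have hdisjF : ∀ C ∈ F, ∀ C' ∈ F, C ≠ C' → Disjoint C C' := by
    intro C hC C' hC' hne'
    obtain ⟨e, he, rfl⟩ := Finset.mem_image.mp hC
    obtain ⟨e', he', rfl⟩ := Finset.mem_image.mp hC'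
    by_contra hdisj
    obtain ⟨f, hf1, hf2⟩ := Finset.not_disjoint_iff.mp hdisj
    have h1 : TightlyConnected G k e f := (Finset.mem_filter.mp hf1).2
    have h2 : TightlyConnected G k e' f := (Finset.mem_filter.mp hf2).2
    exact hne' (hcompeq e he e' he'
      (chain_to_tc hG he ((tc_to_chain hG h1).trans (tc_to_chain hG (tc_symm h2)))))
  have hcover : F.biUnion id = G := by
    ext a
    simp only [Finset.mem_biUnion, id]
    constructor
    · rintro ⟨C, hC, haC⟩
      obtain ⟨e, he, rfl⟩ := Finset.mem_image.mp hC
      exact hcompsub e haC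
    · intro ha
      exact ⟨comp a, Finset.mem_image_of_mem _ ha, hmemcomp a ha⟩
  have hsum1 : ∑ C ∈ F, C.card = G.card := by
    rw [← hcover]
    exact (Finset.card_biUnion hdisjF).symm
  -- the (k-1)-sets of distinct components are disjoint
  set S : Finset (Finset V) → Finset (Finset V) :=
    fun C => (downClosure C).filter (fun s => s.card = k - 1) with hS
  have hdisjS : ∀ C ∈ F, ∀ C' ∈ F, C ≠ C' → Disjoint (S C) (S C') := by
    intro C hC C' hC' hne'
    obtain ⟨e, he, rfl⟩ := Finset.mem_image.mp hC
    obtain ⟨e', he', rfl⟩ := Finset.mem_image.mp hC'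
    by_contra hdisj
    obtain ⟨s, hs1, hs2⟩ := Finset.not_disjoint_iff.mp hdisj
    obtain ⟨hs1', hscard⟩ := Finset.mem_filter.mp hs1
    obtain ⟨hs2', -⟩ := Finset.mem_filter.mp hs2
    obtain ⟨u, hu, hsu⟩ := Finset.mem_biUnion.mp hs1'
    obtain ⟨u', hu', hsu'⟩ := Finset.mem_biUnion.mp hs2'
    rw [Finset.mem_powerset] at hsu hsu'
    have huG : u ∈ G := hcompsub _ hu
    have huG' : u' ∈ G := hcompsub _ hu'
    have hadj : Adj G k u u' := by
      refine ⟨huG, huG', ?_⟩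
      calc k - 1 = s.card := hscard.symm
        _ ≤ (u ∩ u').card := Finset.card_le_card (Finset.subset_inter hsu hsu')
    have huu' : TightlyConnected G k u u' :=
      chain_to_tc hG huG (Relation.ReflTransGen.single hadj)
    have h1 : TightlyConnected G k e u := (Finset.mem_filter.mp hu).2
    have h2 : TightlyConnected G k e' u' := (Finset.mem_filter.mp hu').2
    exact hne' (hcompeq e he e' he' (chain_to_tc hG he
      (((tc_to_chain hG h1).trans (tc_to_chain hG huu')).trans
        (tc_to_chain hG (tc_symm h2)))))
  have hsum2 : ∑ C ∈ F, ecount (downClosure C) (k - 1) ≤ n.choose (k - 1) := by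
    have : ∑ C ∈ F, ecount (downClosure C) (k - 1) = (F.biUnion S).card :=
      (Finset.card_biUnion hdisjS).symm
    rw [this]
    have hsubs : F.biUnion S ⊆ Finset.powersetCard (k - 1) (Finset.univ : Finset V) := by
      intro s hs
      obtain ⟨C, -, hsC⟩ := Finset.mem_biUnion.mp hs
      exact Finset.mem_powersetCard.mpr
        ⟨Finset.subset_univ s, (Finset.mem_filter.mp hsC).2⟩
    calc (F.biUnion S).card ≤ _ := Finset.card_le_card hsubs
      _ = n.choose (k - 1) := by rw [Finset.card_powersetCard, Finset.card_univ, hn]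
  have hek : ∀ C ∈ F, ecount (downClosure C) k = C.card := by
    intro C hC
    obtain ⟨e, he, rfl⟩ := Finset.mem_image.mp hC
    unfold ecount
    congr 1
    ext s
    simp only [Finset.mem_filter, downClosure, Finset.mem_biUnion, Finset.mem_powerset]
    constructor
    · rintro ⟨⟨u, hu, hsu⟩, hcard⟩
      have : s = u := Finset.eq_of_subset_of_card_le hsu
        (by rw [hG u (hcompsub _ hu), hcard])
      rwa [this]
    · intro hs
      exact ⟨⟨s, hs, Finset.Subset.refl s⟩, hG s (hcompsub _ hs)⟩
  by_contra hcon
  push_neg at hcon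
  have hstep : ∀ C ∈ F, C.card * n.choose (k - 1) <
      ecount (downClosure C) (k - 1) * G.card := by
    intro C hC
    obtain ⟨e, he, hCe⟩ := Finset.mem_image.mp hC
    have hcomp' : IsTightComponent G k C :=
      ⟨e, he, fun f => by rw [← hCe]; exact Finset.mem_filter⟩
    have := hcon C hcomp'
    rwa [hek C hC] at this
  have hFne : F.Nonempty := ⟨comp e₀, Finset.mem_image_of_mem _ he₀⟩
  have hlt := Finset.sum_lt_sum_of_nonempty hFne hstep
  rw [← Finset.sum_mul, ← Finset.sum_mul, hsum1] at hlt
  have hle : (∑ C ∈ F, ecount (downClosure C) (k - 1)) * G.card ≤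
      n.choose (k - 1) * G.card := Nat.mul_le_mul_right G.card hsum2
  have := hlt.trans_le hle
  rw [mul_comm] at this
  exact lt_irrefl _ this
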